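/- (Minty's theorem.) Let Φ : ℝᵐ × ℝⁿ × ℝⁿ → ℝ be a K-function. Let (x₁, y₁), …, (x_l, y_l) ∈ ℝᵐ × ℝⁿ satisfy Φ(xᵢ − xⱼ, yᵢ, yⱼ) ≤ 0 for all i, j = 1, …, l, and let y ∈ ℝⁿ. Then there exists x in the convex hull of {x₁, …, x_l} such that Φ(xᵢ − x, yᵢ, y) ≤ 0 for all i = 1, …, l. -/

import Mathlib

/-- A `K`-function in the sense of Minty: lower semicontinuous and convex in the
first variable, and satisfying the averaging inequality. -/
def IsKFunction (m n : ℕ)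
    (Φ : EuclideanSpace ℝ (Fin m) → EuclideanSpace ℝ (Fin n) → EuclideanSpace ℝ (Fin n) → ℝ) :
    Prop :=
  (∀ y y' : EuclideanSpace ℝ (Fin n),
      LowerSemicontinuous (fun x => Φ x y y') ∧
      ConvexOn ℝ Set.univ (fun x => Φ x y y')) ∧
  (∀ (l : ℕ) (x : Fin l → EuclideanSpace ℝ (Fin m))
      (yv : Fin l → EuclideanSpace ℝ (Fin n)) (lam : Fin l → ℝ),
    (∀ i, 0 ≤ lam i) → (∑ i, lam i = 1) →
    ∀ y : EuclideanSpace ℝ (Fin n),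
      ∑ i, ∑ j, lam i * lam j * Φ (x i - x j) (yv i) (yv j) ≥
        2 * ∑ i, lam i * Φ (x i - ∑ j, lam j • x j) (yv i) y)

open Finset Set


theorem minty_sep (l : ℕ) (hl : 0 < l) (g : Fin l → (Fin l → ℝ) → ℝ)
    (hconv : ∀ i, ConvexOn ℝ (stdSimplex ℝ (Fin l)) (g i))
    (hcont : ∀ i, Continuous (g i))
    (havg : ∀ lam ∈ stdSimplex ℝ (Fin l), ∑ i, lam i * g i lam ≤ 0) :
    ∃ lam ∈ stdSimplex ℝ (Fin l), ∀ i, g i lam ≤ 0 := by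
  by_contra hcon
  push_neg at hcon
  have hne : (Finset.univ : Finset (Fin l)).Nonempty := ⟨⟨0, hl⟩, Finset.mem_univ _⟩
  set h : (Fin l → ℝ) → ℝ := fun lam => Finset.univ.sup' hne (fun i => g i lam) with hh
  have hhc : Continuous h := Continuous.finset_sup'_apply hne fun i _ => hcont i
  -- a vertex of the simplex
  have hvertex : (fun j => if j = ⟨0, hl⟩ then (1:ℝ) else 0) ∈ stdSimplex ℝ (Fin l) := by
    constructor
    · intro j; dsimp only; split <;> norm_num
    · simp
  have hsne : (stdSimplex ℝ (Fin l)).Nonempty := ⟨_, hvertex⟩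
  obtain ⟨lam₀, hlam₀, hmin⟩ := (isCompact_stdSimplex ℝ (Fin l)).exists_isMinOn hsne
    hhc.continuousOn
  set δ : ℝ := h lam₀ with hδdef
  have hδpos : 0 < δ := by
    obtain ⟨i, hi⟩ := hcon lam₀ hlam₀
    exact lt_of_lt_of_le hi (Finset.le_sup' (fun i => g i lam₀) (Finset.mem_univ i))
  have hδle : ∀ lam ∈ stdSimplex ℝ (Fin l), δ ≤ h lam := fun lam hlam => hmin hlam
  -- the convex sets to separate
  set C : Set (Fin l → ℝ) := {z | ∃ lam ∈ stdSimplex ℝ (Fin l), ∀ i, g i lam ≤ z i} with hC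
  set U : Set (Fin l → ℝ) := {z | ∀ i, z i < δ} with hU
  have hUopen : IsOpen U := by
    have : U = Set.pi Set.univ (fun _ : Fin l => Iio δ) := by
      ext z; simp [hU, Set.mem_pi]
    rw [this]
    exact isOpen_set_pi Set.finite_univ (fun _ _ => isOpen_Iio)
  have hUconv : Convex ℝ U := by
    have : U = Set.pi Set.univ (fun _ : Fin l => Iio δ) := by
      ext z; simp [hU, Set.mem_pi]
    rw [this]
    exact convex_pi (fun _ _ => convex_Iio δ)
  have hCconv : Convex ℝ C := by
    rintro z ⟨lam, hlam, hz⟩ w ⟨mu, hmu, hw⟩ a b ha hb hab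
    refine ⟨a • lam + b • mu, (convex_stdSimplex ℝ (Fin l)) hlam hmu ha hb hab, fun i => ?_⟩
    calc g i (a • lam + b • mu) ≤ a * g i lam + b * g i mu :=
          (hconv i).2 hlam hmu ha hb hab
      _ ≤ a * z i + b * w i := by
          gcongr
          · exact hz i
          · exact hw i
      _ = (a • z + b • w) i := by simp
  have hdisj : Disjoint U C := by
    rw [Set.disjoint_left]
    rintro z hzU ⟨lam, hlam, hz⟩
    have h1 : δ ≤ h lam := hδle lam hlam
    obtain ⟨i, _, hi⟩ := Finset.exists_mem_eq_sup' hne (fun i => g i lam)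
    have h1' : δ ≤ Finset.univ.sup' hne fun i => g i lam := h1
    rw [hi] at h1'
    have : δ ≤ g i lam := h1'
    exact absurd (lt_of_le_of_lt (this.trans (hz i)) (hzU i)) (lt_irrefl δ)
  obtain ⟨f, u, hfU, hfC⟩ := geometric_hahn_banach_open hUconv hUopen hCconv hdisj
  -- coordinates of f
  set μ : Fin l → ℝ := fun i => f (fun j => if i = j then (1:ℝ) else 0) with hμ
  have hrep : ∀ z : Fin l → ℝ, f z = ∑ i, z i * μ i := by
    intro z
    conv_lhs => rw [pi_eq_sum_univ z]
    rw [map_sum]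
    simp [hμ, smul_eq_mul]
  -- C nonempty gives a lower bound for u being finite; U nonempty
  have hCne : ((fun i => g i (fun j => if j = ⟨0, hl⟩ then (1:ℝ) else 0)) : Fin l → ℝ) ∈ C :=
    ⟨_, hvertex, fun i => le_refl _⟩
  have hUne : ((fun _ => δ - 1) : Fin l → ℝ) ∈ U := fun i => by norm_num
  -- μ is nonnegative
  have hμnn : ∀ i, 0 ≤ μ i := by
    intro i
    by_contra hneg
    push_neg at hneg
    have hs0 : f (fun _ => δ - 1) < u := hfU _ hUne
    set s0 : ℝ := ∑ j, (δ - 1) * μ j with hs0def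
    have hfs0 : f (fun _ => δ - 1) = s0 := by rw [hrep]
    set t : ℝ := (u - s0 + 1) / (-μ i) with ht
    have htpos : 0 < t := by
      apply div_pos
      · rw [hfs0] at hs0; linarith
      · linarith
    have hzt : (fun j => (δ - 1) + (if i = j then -t else 0)) ∈ U := by
      intro j
      dsimp only
      split <;> [linarith; linarith]
    have := hfU _ hzt
    rw [hrep] at this
    have hsum : ∑ j, ((δ - 1) + (if i = j then -t else 0)) * μ j
        = s0 + (-t) * μ i := by
      rw [hs0def]
      simp only [add_mul, Finset.sum_add_distrib, ite_mul, zero_mul]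
      rw [Finset.sum_ite_eq]
      simp
    rw [hsum] at this
    have hμi : -μ i ≠ 0 := ne_of_gt (neg_pos.mpr hneg)
    have : -t * μ i = u - s0 + 1 := by
      rw [ht, neg_mul, div_mul_eq_mul_div, div_neg, neg_neg, mul_div_assoc, div_self (ne_of_lt hneg), mul_one]
    linarith
  -- sum of μ is positive
  have hμne : ∃ i, μ i ≠ 0 := by
    by_contra hall
    push_neg at hall
    have h1 := hfU _ hUne
    have h2 := hfC _ hCne
    rw [hrep] at h1 h2
    simp [hall] at h1 h2
    linarith
  set s : ℝ := ∑ i, μ i with hs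
  have hspos : 0 < s := by
    obtain ⟨i, hi⟩ := hμne
    have : 0 < μ i := lt_of_le_of_ne (hμnn i) (Ne.symm hi)
    calc (0:ℝ) < μ i := this
      _ ≤ s := Finset.single_le_sum (fun j _ => hμnn j) (Finset.mem_univ i)
  -- u ≥ δ * s
  have huds : δ * s ≤ u := by
    by_contra hlt
    push_neg at hlt
    have htlt : u / s < δ := by rwa [div_lt_iff₀ hspos]
    have hmem : ((fun _ => u / s) : Fin l → ℝ) ∈ U := fun i => htlt
    have := hfU _ hmem
    rw [hrep] at this
    have : ∑ i, (u / s) * μ i = u := by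
      rw [← Finset.mul_sum, ← hs, div_mul_cancel₀]
      exact ne_of_gt hspos
    linarith [hfU _ hmem, this, (hrep (fun _ => u / s))]
  -- the contradiction
  set lam' : Fin l → ℝ := fun i => μ i / s with hlam'
  have hlam'mem : lam' ∈ stdSimplex ℝ (Fin l) := by
    constructor
    · intro i; exact div_nonneg (hμnn i) hspos.le
    · rw [← Finset.sum_div, ← hs, div_self (ne_of_gt hspos)]
  have hzC : ((fun i => g i lam') : Fin l → ℝ) ∈ C := ⟨lam', hlam'mem, fun i => le_refl _⟩
  have h2 := hfC _ hzC
  rw [hrep] at h2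
  have hkey : ∑ i, g i lam' * μ i = s * ∑ i, lam' i * g i lam' := by
    rw [Finset.mul_sum]
    congr 1
    ext i
    rw [hlam']
    field_simp
  have := havg lam' hlam'mem
  nlinarith [hδpos, hspos]

theorem stmt_8 (m n : ℕ)
    (Φ : EuclideanSpace ℝ (Fin m) → EuclideanSpace ℝ (Fin n) → EuclideanSpace ℝ (Fin n) → ℝ)
    (hΦ : IsKFunction m n Φ)
    (l : ℕ) (hl : 0 < l)
    (x : Fin l → EuclideanSpace ℝ (Fin m)) (yv : Fin l → EuclideanSpace ℝ (Fin n))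
    (hxy : ∀ i j, Φ (x i - x j) (yv i) (yv j) ≤ 0)
    (y : EuclideanSpace ℝ (Fin n)) :
    ∃ x₀ ∈ convexHull ℝ (Set.range x), ∀ i, Φ (x i - x₀) (yv i) y ≤ 0 := by
  set g : Fin l → (Fin l → ℝ) → ℝ :=
    fun i lam => Φ (x i - ∑ j, lam j • x j) (yv i) y with hg
  -- affinity of the inner map
  have hA : ∀ (i : Fin l) (lam mu : Fin l → ℝ) (a b : ℝ), a + b = 1 →
      x i - ∑ j, (a • lam + b • mu) j • x j
        = a • (x i - ∑ j, lam j • x j) + b • (x i - ∑ j, mu j • x j) := by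
    intro i lam mu a b hab
    rw [smul_sub, smul_sub, sub_add_sub_comm, ← add_smul, hab, one_smul]
    congr 1
    rw [Finset.smul_sum, Finset.smul_sum, ← Finset.sum_add_distrib]
    refine Finset.sum_congr rfl fun j _ => ?_
    simp [add_smul, smul_smul]
  have hconv : ∀ i, ConvexOn ℝ (stdSimplex ℝ (Fin l)) (g i) := by
    intro i
    refine ⟨convex_stdSimplex ℝ (Fin l), fun lam _ mu _ a b ha hb hab => ?_⟩
    have h1 := (hΦ.1 (yv i) y).2.2 (Set.mem_univ (x i - ∑ j, lam j • x j))
      (Set.mem_univ (x i - ∑ j, mu j • x j)) ha hb hab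
    simp only [hg, smul_eq_mul]
    rw [hA i lam mu a b hab]
    exact h1
  have hcont : ∀ i, Continuous (g i) := by
    intro i
    have hΦc : Continuous (fun v => Φ v (yv i) y) := by
      have := (ConvexOn.continuousOn isOpen_univ
        ((hΦ.1 (yv i) y).2.subset (Set.subset_univ _) convex_univ))
      rwa [← continuousOn_univ]
    have hAc : Continuous (fun lam : Fin l → ℝ => x i - ∑ j, lam j • x j) :=
      continuous_const.sub (continuous_finset_sum _ fun j _ =>
        (continuous_apply j).smul continuous_const)
    exact hΦc.comp hAc
  have havg : ∀ lam ∈ stdSimplex ℝ (Fin l), ∑ i, lam i * g i lam ≤ 0 := by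
    intro lam hlam
    have H := hΦ.2 l x yv lam hlam.1 hlam.2 y
    have hnp : ∑ i, ∑ j, lam i * lam j * Φ (x i - x j) (yv i) (yv j) ≤ 0 := by
      refine Finset.sum_nonpos fun i _ => Finset.sum_nonpos fun j _ => ?_
      exact mul_nonpos_of_nonneg_of_nonpos (mul_nonneg (hlam.1 i) (hlam.1 j)) (hxy i j)
    have : 2 * ∑ i, lam i * g i lam ≤ 0 := le_trans (le_of_le_of_eq H.le rfl) hnp
    linarith
  obtain ⟨lam, hlam, hle⟩ := minty_sep l hl g hconv hcont havg
  refine ⟨∑ j, lam j • x j, ?_, hle⟩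
  exact (convex_convexHull ℝ (Set.range x)).sum_mem (fun j _ => hlam.1 j) hlam.2
    (fun j _ => subset_convexHull ℝ _ ⟨j, rfl⟩)
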